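/- For h, k ∈ ℕ with k ≥ h, the symplectic spinor s̃_{o,k}^h(x,y,q) = e^{−q²/2} Σ_{p=0}^{h} (−1)^p ((2k+1)!!/(2k−2p+1)!!) binom(h,p) q^{2k+1−2p} (x+iy)^{h−p} (iy)^p (odd in q) and the symplectic spinor s̃_{e,k}^h(x,y,q) = e^{−q²/2} Σ_{p=0}^{h} (−1)^p ((2k)!!/(2k−2p)!!) binom(h,p) q^{2k−2p} (x+iy)^{h−p} (iy)^p (even in q) both lie in the kernel of the symplectic Dirac operator: D_s s̃_{o,k}^h = 0 and D_s s̃_{e,k}^h = 0. Both are homogeneous of degree h in (x,y): E s̃_{o,k}^h = h s̃_{o,k}^h and E s̃_{e,k}^h = h s̃_{e,k}^h. -/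

import Mathlib

noncomputable section

open Complex Finset

/-- Points `(x, y, q)` of `ℝ³`. -/
abbrev P3 := ℝ × ℝ × ℝ

/-- Partial derivative with respect to `x`. -/
def pdx (f : P3 → ℂ) : P3 → ℂ := fun p => deriv (fun t => f (t, p.2.1, p.2.2)) p.1

/-- Partial derivative with respect to `y`. -/
def pdy (f : P3 → ℂ) : P3 → ℂ := fun p => deriv (fun t => f (p.1, t, p.2.2)) p.2.1

/-- Partial derivative with respect to `q`. -/
def pdq (f : P3 → ℂ) : P3 → ℂ := fun p => deriv (fun t => f (p.1, p.2.1, t)) p.2.2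

/-- The symplectic Dirac operator `D_s f = i q ∂_y f − ∂_x ∂_q f`. -/
def Ds (f : P3 → ℂ) : P3 → ℂ := fun p =>
  Complex.I * (p.2.2 : ℂ) * pdy f p - pdx (pdq f) p

/-- The operator `X_s f = y ∂_q f + i x q f`. -/
def Xs (f : P3 → ℂ) : P3 → ℂ := fun p =>
  (p.2.1 : ℂ) * pdq f p + Complex.I * (p.1 : ℂ) * (p.2.2 : ℂ) * f p

/-- The Euler operator `E f = x ∂_x f + y ∂_y f`. -/
def Eul (f : P3 → ℂ) : P3 → ℂ := fun p =>
  (p.1 : ℂ) * pdx f p + (p.2.1 : ℂ) * pdy f p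

/-- The odd basis element
`s̃_{o,k}^h = e^{−q²/2} Σ_{p=0}^{h} (−1)^p ((2k+1)!!/(2k−2p+1)!!) binom(h,p)
q^{2k+1−2p} (x+iy)^{h−p} (iy)^p`. -/
def sOdd (h k : ℕ) : P3 → ℂ := fun r =>
  Complex.exp (-(r.2.2 : ℂ) ^ 2 / 2) *
    ∑ p ∈ Finset.range (h + 1),
      (-1 : ℂ) ^ p * ((Nat.doubleFactorial (2 * k + 1) : ℂ) /
          (Nat.doubleFactorial (2 * k - 2 * p + 1) : ℂ)) * (h.choose p : ℂ) *
        (r.2.2 : ℂ) ^ (2 * k + 1 - 2 * p) *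
          ((r.1 : ℂ) + Complex.I * (r.2.1 : ℂ)) ^ (h - p) *
            (Complex.I * (r.2.1 : ℂ)) ^ p

/-- The even basis element
`s̃_{e,k}^h = e^{−q²/2} Σ_{p=0}^{h} (−1)^p ((2k)!!/(2k−2p)!!) binom(h,p)
q^{2k−2p} (x+iy)^{h−p} (iy)^p`. -/
def sEven (h k : ℕ) : P3 → ℂ := fun r =>
  Complex.exp (-(r.2.2 : ℂ) ^ 2 / 2) *
    ∑ p ∈ Finset.range (h + 1),
      (-1 : ℂ) ^ p * ((Nat.doubleFactorial (2 * k) : ℂ) /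
          (Nat.doubleFactorial (2 * k - 2 * p) : ℂ)) * (h.choose p : ℂ) *
        (r.2.2 : ℂ) ^ (2 * k - 2 * p) *
          ((r.1 : ℂ) + Complex.I * (r.2.1 : ℂ)) ^ (h - p) *
            (Complex.I * (r.2.1 : ℂ)) ^ p

/- ### Auxiliary derivative lemmas -/

private lemma hd_x (N : ℕ) (d : ℕ → ℂ) (e : ℕ → ℕ) (y x : ℝ) :
    HasDerivAt
      (fun t : ℝ => ∑ p ∈ Finset.range N,
        d p * ((t : ℂ) + Complex.I * (y : ℂ)) ^ e p * (Complex.I * (y : ℂ)) ^ p)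
      (∑ p ∈ Finset.range N,
        d p * ((e p : ℂ) * ((x : ℂ) + Complex.I * (y : ℂ)) ^ (e p - 1)) *
          (Complex.I * (y : ℂ)) ^ p) x := by
  have hC : HasDerivAt
      (fun z : ℂ => ∑ p ∈ Finset.range N,
        d p * (z + Complex.I * (y : ℂ)) ^ e p * (Complex.I * (y : ℂ)) ^ p)
      (∑ p ∈ Finset.range N,
        d p * ((e p : ℂ) * ((x : ℂ) + Complex.I * (y : ℂ)) ^ (e p - 1)) *
          (Complex.I * (y : ℂ)) ^ p) ((x : ℝ) : ℂ) := by
    apply HasDerivAt.fun_sum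
    intro p _
    have h1 : HasDerivAt (fun z : ℂ => (z + Complex.I * (y : ℂ)) ^ e p)
        ((e p : ℂ) * ((x : ℂ) + Complex.I * (y : ℂ)) ^ (e p - 1)) ((x : ℝ) : ℂ) := by
      simpa using ((hasDerivAt_id ((x : ℝ) : ℂ)).add_const (Complex.I * (y : ℂ))).fun_pow (e p)
    exact (h1.const_mul (d p)).mul_const _
  simpa using hC.comp_ofReal

private lemma hd_y (N : ℕ) (d : ℕ → ℂ) (e : ℕ → ℕ) (x y : ℝ) :
    HasDerivAt
      (fun t : ℝ => ∑ p ∈ Finset.range N,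
        d p * ((x : ℂ) + Complex.I * (t : ℂ)) ^ e p * (Complex.I * (t : ℂ)) ^ p)
      (∑ p ∈ Finset.range N,
        (d p * ((e p : ℂ) * ((x : ℂ) + Complex.I * (y : ℂ)) ^ (e p - 1) * Complex.I) *
            (Complex.I * (y : ℂ)) ^ p
          + d p * ((x : ℂ) + Complex.I * (y : ℂ)) ^ e p *
              ((p : ℂ) * (Complex.I * (y : ℂ)) ^ (p - 1) * Complex.I))) y := by
  have hC : HasDerivAt
      (fun z : ℂ => ∑ p ∈ Finset.range N,
        d p * ((x : ℂ) + Complex.I * z) ^ e p * (Complex.I * z) ^ p)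
      (∑ p ∈ Finset.range N,
        (d p * ((e p : ℂ) * ((x : ℂ) + Complex.I * (y : ℂ)) ^ (e p - 1) * Complex.I) *
            (Complex.I * (y : ℂ)) ^ p
          + d p * ((x : ℂ) + Complex.I * (y : ℂ)) ^ e p *
              ((p : ℂ) * (Complex.I * (y : ℂ)) ^ (p - 1) * Complex.I))) ((y : ℝ) : ℂ) := by
    apply HasDerivAt.fun_sum
    intro p _
    have hW : HasDerivAt (fun z : ℂ => (x : ℂ) + Complex.I * z) Complex.I ((y : ℝ) : ℂ) := by
      simpa using ((hasDerivAt_id ((y : ℝ) : ℂ)).const_mul Complex.I).const_add ((x : ℝ) : ℂ)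
    have hU : HasDerivAt (fun z : ℂ => (Complex.I * z) ^ p)
        ((p : ℂ) * (Complex.I * (y : ℂ)) ^ (p - 1) * Complex.I) ((y : ℝ) : ℂ) := by
      simpa using ((hasDerivAt_id ((y : ℝ) : ℂ)).const_mul Complex.I).fun_pow p
    have h2 := ((hW.fun_pow (e p)).const_mul (d p)).fun_mul hU
    convert h2 using 1
  simpa using hC.comp_ofReal

private lemma hd_q (N : ℕ) (d : ℕ → ℂ) (a : ℕ → ℕ) (q : ℝ) :
    HasDerivAt
      (fun t : ℝ => Complex.exp (-(t : ℂ) ^ 2 / 2) * ∑ p ∈ Finset.range N, d p * (t : ℂ) ^ a p)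
      (Complex.exp (-(q : ℂ) ^ 2 / 2) *
        ∑ p ∈ Finset.range N,
          d p * ((a p : ℂ) * (q : ℂ) ^ (a p - 1) - (q : ℂ) ^ (a p + 1))) q := by
  have hE : HasDerivAt (fun z : ℂ => Complex.exp (-z ^ 2 / 2))
      (Complex.exp (-(q : ℂ) ^ 2 / 2) * (-(q : ℂ))) ((q : ℝ) : ℂ) := by
    have h1 : HasDerivAt (fun z : ℂ => -z ^ 2 / 2) (-(q : ℂ)) ((q : ℝ) : ℂ) := by
      have h0 := ((hasDerivAt_pow 2 ((q : ℝ) : ℂ)).fun_neg).div_const (2 : ℂ)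
      exact h0.congr_deriv (by norm_num; ring)
    simpa using h1.cexp
  have hS : HasDerivAt (fun z : ℂ => ∑ p ∈ Finset.range N, d p * z ^ a p)
      (∑ p ∈ Finset.range N, d p * ((a p : ℂ) * (q : ℂ) ^ (a p - 1))) ((q : ℝ) : ℂ) := by
    apply HasDerivAt.fun_sum
    intro p _
    simpa using ((hasDerivAt_id ((q : ℝ) : ℂ)).pow (a p)).const_mul (d p)
  have h2 : HasDerivAt
      (fun t : ℝ => Complex.exp (-(t : ℂ) ^ 2 / 2) * ∑ p ∈ Finset.range N, d p * (t : ℂ) ^ a p)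
      (Complex.exp (-(q : ℂ) ^ 2 / 2) * (-(q : ℂ)) *
          (∑ p ∈ Finset.range N, d p * (q : ℂ) ^ a p)
        + Complex.exp (-(q : ℂ) ^ 2 / 2) *
            ∑ p ∈ Finset.range N, d p * ((a p : ℂ) * (q : ℂ) ^ (a p - 1))) q := by
    simpa using (hE.mul hS).comp_ofReal
  convert h2 using 1
  rw [Finset.mul_sum, Finset.mul_sum, Finset.mul_sum, ← Finset.sum_add_distrib]
  exact Finset.sum_congr rfl fun p _ => by rw [pow_succ]; ring

private lemma cast_pow_pred (z : ℂ) (n : ℕ) : (n : ℂ) * z ^ (n - 1) * z = (n : ℂ) * z ^ n := by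
  cases n with
  | zero => simp
  | succ m => rw [Nat.succ_sub_one, pow_succ]; ring

/- ### The general family -/

private def gS (c : ℕ → ℂ) (a : ℕ → ℕ) (h : ℕ) : P3 → ℂ := fun r =>
  Complex.exp (-(r.2.2 : ℂ) ^ 2 / 2) *
    ∑ p ∈ Finset.range (h + 1),
      c p * (r.2.2 : ℂ) ^ a p * ((r.1 : ℂ) + Complex.I * (r.2.1 : ℂ)) ^ (h - p) *
        (Complex.I * (r.2.1 : ℂ)) ^ p

private lemma pdx_gS (c : ℕ → ℂ) (a : ℕ → ℕ) (h : ℕ) (x y q : ℝ) :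
    pdx (gS c a h) (x, y, q) =
      Complex.exp (-(q : ℂ) ^ 2 / 2) *
        ∑ p ∈ Finset.range (h + 1),
          (c p * (q : ℂ) ^ a p) *
            (((h - p : ℕ) : ℂ) * ((x : ℂ) + Complex.I * (y : ℂ)) ^ (h - p - 1)) *
              (Complex.I * (y : ℂ)) ^ p := by
  show deriv (fun t : ℝ => gS c a h (t, y, q)) x = _
  have hfun : (fun t : ℝ => gS c a h (t, y, q)) =
      fun t : ℝ => Complex.exp (-(q : ℂ) ^ 2 / 2) *
        ∑ p ∈ Finset.range (h + 1),
          (c p * (q : ℂ) ^ a p) * ((t : ℂ) + Complex.I * (y : ℂ)) ^ (h - p) *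
            (Complex.I * (y : ℂ)) ^ p := rfl
  rw [hfun]
  exact ((hd_x (h + 1) (fun p => c p * (q : ℂ) ^ a p) (fun p => h - p) y x).const_mul
    (Complex.exp (-(q : ℂ) ^ 2 / 2))).deriv

private lemma pdy_gS (c : ℕ → ℂ) (a : ℕ → ℕ) (h : ℕ) (x y q : ℝ) :
    pdy (gS c a h) (x, y, q) =
      Complex.exp (-(q : ℂ) ^ 2 / 2) *
        ∑ p ∈ Finset.range (h + 1),
          ((c p * (q : ℂ) ^ a p) *
              (((h - p : ℕ) : ℂ) * ((x : ℂ) + Complex.I * (y : ℂ)) ^ (h - p - 1) * Complex.I) *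
                (Complex.I * (y : ℂ)) ^ p
            + (c p * (q : ℂ) ^ a p) * ((x : ℂ) + Complex.I * (y : ℂ)) ^ (h - p) *
                ((p : ℂ) * (Complex.I * (y : ℂ)) ^ (p - 1) * Complex.I)) := by
  show deriv (fun t : ℝ => gS c a h (x, t, q)) y = _
  have hfun : (fun t : ℝ => gS c a h (x, t, q)) =
      fun t : ℝ => Complex.exp (-(q : ℂ) ^ 2 / 2) *
        ∑ p ∈ Finset.range (h + 1),
          (c p * (q : ℂ) ^ a p) * ((x : ℂ) + Complex.I * (t : ℂ)) ^ (h - p) *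
            (Complex.I * (t : ℂ)) ^ p := rfl
  rw [hfun]
  exact ((hd_y (h + 1) (fun p => c p * (q : ℂ) ^ a p) (fun p => h - p) x y).const_mul
    (Complex.exp (-(q : ℂ) ^ 2 / 2))).deriv

private lemma pdq_gS (c : ℕ → ℂ) (a : ℕ → ℕ) (h : ℕ) :
    pdq (gS c a h) = fun r =>
      Complex.exp (-(r.2.2 : ℂ) ^ 2 / 2) *
        ∑ p ∈ Finset.range (h + 1),
          (c p * ((a p : ℂ) * (r.2.2 : ℂ) ^ (a p - 1) - (r.2.2 : ℂ) ^ (a p + 1))) *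
            ((r.1 : ℂ) + Complex.I * (r.2.1 : ℂ)) ^ (h - p) *
              (Complex.I * (r.2.1 : ℂ)) ^ p := by
  funext r
  obtain ⟨x, y, q⟩ := r
  show deriv (fun t : ℝ => gS c a h (x, y, t)) q = _
  have hfun : (fun t : ℝ => gS c a h (x, y, t)) =
      fun t : ℝ => Complex.exp (-(t : ℂ) ^ 2 / 2) *
        ∑ p ∈ Finset.range (h + 1),
          (c p * ((x : ℂ) + Complex.I * (y : ℂ)) ^ (h - p) * (Complex.I * (y : ℂ)) ^ p) *
            (t : ℂ) ^ a p := by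
    funext t
    show Complex.exp (-(t : ℂ) ^ 2 / 2) * _ = Complex.exp (-(t : ℂ) ^ 2 / 2) * _
    congr 1
    exact Finset.sum_congr rfl fun p _ => by ring
  rw [hfun,
    (hd_q (h + 1)
      (fun p => c p * ((x : ℂ) + Complex.I * (y : ℂ)) ^ (h - p) * (Complex.I * (y : ℂ)) ^ p)
      a q).deriv]
  congr 1
  exact Finset.sum_congr rfl fun p _ => by ring

private lemma pdxpdq_gS (c : ℕ → ℂ) (a : ℕ → ℕ) (h : ℕ) (x y q : ℝ) :
    pdx (pdq (gS c a h)) (x, y, q) =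
      Complex.exp (-(q : ℂ) ^ 2 / 2) *
        ∑ p ∈ Finset.range (h + 1),
          (c p * ((a p : ℂ) * (q : ℂ) ^ (a p - 1) - (q : ℂ) ^ (a p + 1))) *
            (((h - p : ℕ) : ℂ) * ((x : ℂ) + Complex.I * (y : ℂ)) ^ (h - p - 1)) *
              (Complex.I * (y : ℂ)) ^ p := by
  rw [pdq_gS]
  show deriv (fun t : ℝ =>
      Complex.exp (-(q : ℂ) ^ 2 / 2) *
        ∑ p ∈ Finset.range (h + 1),
          (c p * ((a p : ℂ) * (q : ℂ) ^ (a p - 1) - (q : ℂ) ^ (a p + 1))) *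
            ((t : ℂ) + Complex.I * (y : ℂ)) ^ (h - p) *
              (Complex.I * (y : ℂ)) ^ p) x = _
  exact ((hd_x (h + 1)
      (fun p => c p * ((a p : ℂ) * (q : ℂ) ^ (a p - 1) - (q : ℂ) ^ (a p + 1)))
      (fun p => h - p) y x).const_mul (Complex.exp (-(q : ℂ) ^ 2 / 2))).deriv

/- ### Main computations for the general family -/

private lemma Ds_gS (c : ℕ → ℂ) (a : ℕ → ℕ) (h : ℕ)
    (H1 : ∀ p, p < h →
      ((p : ℂ) + 1) * c (p + 1) = -(c p * ((h - p : ℕ) : ℂ) * ((a p : ℕ) : ℂ)))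
    (H2 : ∀ p, p < h → a (p + 1) + 1 = a p - 1) :
    ∀ r, Ds (gS c a h) r = 0 := by
  rintro ⟨x, y, q⟩
  have hy := pdy_gS c a h x y q
  have hq := pdxpdq_gS c a h x y q
  show Complex.I * (q : ℂ) * pdy (gS c a h) (x, y, q) - pdx (pdq (gS c a h)) (x, y, q) = 0
  rw [hy, hq]
  have main : ∑ p ∈ Finset.range (h + 1),
      (Complex.I * (q : ℂ) *
        ((c p * (q : ℂ) ^ a p) *
            (((h - p : ℕ) : ℂ) * ((x : ℂ) + Complex.I * (y : ℂ)) ^ (h - p - 1) * Complex.I) *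
              (Complex.I * (y : ℂ)) ^ p
          + (c p * (q : ℂ) ^ a p) * ((x : ℂ) + Complex.I * (y : ℂ)) ^ (h - p) *
              ((p : ℂ) * (Complex.I * (y : ℂ)) ^ (p - 1) * Complex.I))
        - (c p * ((a p : ℂ) * (q : ℂ) ^ (a p - 1) - (q : ℂ) ^ (a p + 1))) *
            (((h - p : ℕ) : ℂ) * ((x : ℂ) + Complex.I * (y : ℂ)) ^ (h - p - 1)) *
              (Complex.I * (y : ℂ)) ^ p) = 0 := by
    have step : ∀ p ∈ Finset.range (h + 1),
        (Complex.I * (q : ℂ) *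
          ((c p * (q : ℂ) ^ a p) *
              (((h - p : ℕ) : ℂ) * ((x : ℂ) + Complex.I * (y : ℂ)) ^ (h - p - 1) * Complex.I) *
                (Complex.I * (y : ℂ)) ^ p
            + (c p * (q : ℂ) ^ a p) * ((x : ℂ) + Complex.I * (y : ℂ)) ^ (h - p) *
                ((p : ℂ) * (Complex.I * (y : ℂ)) ^ (p - 1) * Complex.I))
          - (c p * ((a p : ℂ) * (q : ℂ) ^ (a p - 1) - (q : ℂ) ^ (a p + 1))) *
              (((h - p : ℕ) : ℂ) * ((x : ℂ) + Complex.I * (y : ℂ)) ^ (h - p - 1)) *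
                (Complex.I * (y : ℂ)) ^ p)
        = (-(c p * (p : ℂ) * (q : ℂ) ^ (a p + 1) * ((x : ℂ) + Complex.I * (y : ℂ)) ^ (h - p) *
              (Complex.I * (y : ℂ)) ^ (p - 1))
          + -(c p * ((h - p : ℕ) : ℂ) * ((a p : ℕ) : ℂ) * (q : ℂ) ^ (a p - 1) *
              ((x : ℂ) + Complex.I * (y : ℂ)) ^ (h - p - 1) * (Complex.I * (y : ℂ)) ^ p)) := by
      intro p _
      linear_combination ((q : ℂ) * (c p * (q : ℂ) ^ a p) *
          (((h - p : ℕ) : ℂ) * ((x : ℂ) + Complex.I * (y : ℂ)) ^ (h - p - 1)) *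
            (Complex.I * (y : ℂ)) ^ p
        + (q : ℂ) * (c p * (q : ℂ) ^ a p) * ((x : ℂ) + Complex.I * (y : ℂ)) ^ (h - p) *
            ((p : ℂ) * (Complex.I * (y : ℂ)) ^ (p - 1))) * Complex.I_mul_I
    rw [Finset.sum_congr rfl step, Finset.sum_add_distrib]
    have hB : ∑ p ∈ Finset.range (h + 1),
        -(c p * (p : ℂ) * (q : ℂ) ^ (a p + 1) * ((x : ℂ) + Complex.I * (y : ℂ)) ^ (h - p) *
            (Complex.I * (y : ℂ)) ^ (p - 1))
        = ∑ p ∈ Finset.range h,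
          -(c (p + 1) * ((p + 1 : ℕ) : ℂ) * (q : ℂ) ^ (a (p + 1) + 1) *
            ((x : ℂ) + Complex.I * (y : ℂ)) ^ (h - (p + 1)) *
              (Complex.I * (y : ℂ)) ^ (p + 1 - 1)) := by
      rw [Finset.sum_range_succ']
      simp
    have hD : ∑ p ∈ Finset.range (h + 1),
        -(c p * ((h - p : ℕ) : ℂ) * ((a p : ℕ) : ℂ) * (q : ℂ) ^ (a p - 1) *
            ((x : ℂ) + Complex.I * (y : ℂ)) ^ (h - p - 1) * (Complex.I * (y : ℂ)) ^ p)
        = ∑ p ∈ Finset.range h,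
          -(c p * ((h - p : ℕ) : ℂ) * ((a p : ℕ) : ℂ) * (q : ℂ) ^ (a p - 1) *
            ((x : ℂ) + Complex.I * (y : ℂ)) ^ (h - p - 1) * (Complex.I * (y : ℂ)) ^ p) := by
      rw [Finset.sum_range_succ]
      simp
    rw [hB, hD, ← Finset.sum_add_distrib]
    apply Finset.sum_eq_zero
    intro p hp
    have hph : p < h := Finset.mem_range.mp hp
    rw [H2 p hph, show h - (p + 1) = h - p - 1 from by omega, show p + 1 - 1 = p from rfl]
    push_cast
    linear_combination (-(((q : ℂ) ^ (a p - 1)) * ((x : ℂ) + Complex.I * (y : ℂ)) ^ (h - p - 1) *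
      (Complex.I * (y : ℂ)) ^ p)) * H1 p hph
  have split := Finset.sum_sub_distrib (s := Finset.range (h + 1))
    (f := fun p => Complex.I * (q : ℂ) *
        ((c p * (q : ℂ) ^ a p) *
            (((h - p : ℕ) : ℂ) * ((x : ℂ) + Complex.I * (y : ℂ)) ^ (h - p - 1) * Complex.I) *
              (Complex.I * (y : ℂ)) ^ p
          + (c p * (q : ℂ) ^ a p) * ((x : ℂ) + Complex.I * (y : ℂ)) ^ (h - p) *
              ((p : ℂ) * (Complex.I * (y : ℂ)) ^ (p - 1) * Complex.I)))
    (g := fun p => (c p * ((a p : ℂ) * (q : ℂ) ^ (a p - 1) - (q : ℂ) ^ (a p + 1))) *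
        (((h - p : ℕ) : ℂ) * ((x : ℂ) + Complex.I * (y : ℂ)) ^ (h - p - 1)) *
          (Complex.I * (y : ℂ)) ^ p)
  rw [split] at main
  rw [← Finset.mul_sum] at main
  linear_combination Complex.exp (-(q : ℂ) ^ 2 / 2) * main

private lemma Eul_gS (c : ℕ → ℂ) (a : ℕ → ℕ) (h : ℕ) :
    ∀ r, Eul (gS c a h) r = (h : ℂ) * gS c a h r := by
  rintro ⟨x, y, q⟩
  have hx := pdx_gS c a h x y q
  have hy := pdy_gS c a h x y q
  show (x : ℂ) * pdx (gS c a h) (x, y, q) + (y : ℂ) * pdy (gS c a h) (x, y, q)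
      = (h : ℂ) * gS c a h (x, y, q)
  rw [hx, hy]
  show _ = (h : ℂ) * (Complex.exp (-(q : ℂ) ^ 2 / 2) *
    ∑ p ∈ Finset.range (h + 1),
      c p * (q : ℂ) ^ a p * ((x : ℂ) + Complex.I * (y : ℂ)) ^ (h - p) *
        (Complex.I * (y : ℂ)) ^ p)
  have main : (x : ℂ) * (∑ p ∈ Finset.range (h + 1),
        (c p * (q : ℂ) ^ a p) *
          (((h - p : ℕ) : ℂ) * ((x : ℂ) + Complex.I * (y : ℂ)) ^ (h - p - 1)) *
            (Complex.I * (y : ℂ)) ^ p)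
      + (y : ℂ) * (∑ p ∈ Finset.range (h + 1),
        ((c p * (q : ℂ) ^ a p) *
            (((h - p : ℕ) : ℂ) * ((x : ℂ) + Complex.I * (y : ℂ)) ^ (h - p - 1) * Complex.I) *
              (Complex.I * (y : ℂ)) ^ p
          + (c p * (q : ℂ) ^ a p) * ((x : ℂ) + Complex.I * (y : ℂ)) ^ (h - p) *
              ((p : ℂ) * (Complex.I * (y : ℂ)) ^ (p - 1) * Complex.I)))
      = (h : ℂ) * ∑ p ∈ Finset.range (h + 1),
          c p * (q : ℂ) ^ a p * ((x : ℂ) + Complex.I * (y : ℂ)) ^ (h - p) *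
            (Complex.I * (y : ℂ)) ^ p := by
    rw [Finset.mul_sum, Finset.mul_sum, Finset.mul_sum, ← Finset.sum_add_distrib]
    refine Finset.sum_congr rfl fun p hp => ?_
    have hph : p ≤ h := Nat.lt_succ_iff.mp (Finset.mem_range.mp hp)
    have A := cast_pow_pred ((x : ℂ) + Complex.I * (y : ℂ)) (h - p)
    have B := cast_pow_pred (Complex.I * (y : ℂ)) p
    have C : ((h - p : ℕ) : ℂ) = (h : ℂ) - (p : ℂ) := by
      push_cast [Nat.cast_sub hph]
      ring
    linear_combination ((c p * (q : ℂ) ^ a p) * (Complex.I * (y : ℂ)) ^ p) * A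
      + ((c p * (q : ℂ) ^ a p) * ((x : ℂ) + Complex.I * (y : ℂ)) ^ (h - p)) * B
      + ((c p * (q : ℂ) ^ a p) * ((x : ℂ) + Complex.I * (y : ℂ)) ^ (h - p) *
          (Complex.I * (y : ℂ)) ^ p) * C
  linear_combination Complex.exp (-(q : ℂ) ^ 2 / 2) * main

private lemma coeff_aux (S P C1 C0 n D F M : ℂ) (hF : F ≠ 0) (hM : M ≠ 0)
    (he4 : C1 * (P + 1) = C0 * n) :
    (P + 1) * (S * -1 * (D / F) * C1) = -(S * (D / (M * F)) * C0 * n * M) := by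
  have hcancel : D / (M * F) * M = D / F := by
    field_simp
  linear_combination (S * -1 * (D / F)) * he4 + (S * C0 * n) * hcancel

/-- For `k ≥ h`, the spinors `s̃_{o,k}^h` and `s̃_{e,k}^h` are symplectic monogenics of
homogeneity `h`: they lie in the kernel of `D_s` and `E` acts on them by `h`. -/
theorem sOdd_sEven_monogenic (h k : ℕ) (hkh : h ≤ k) :
    (∀ p, Ds (sOdd h k) p = 0) ∧ (∀ p, Ds (sEven h k) p = 0) ∧
    (∀ p, Eul (sOdd h k) p = (h : ℂ) * sOdd h k p) ∧
    (∀ p, Eul (sEven h k) p = (h : ℂ) * sEven h k p) := by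
  set cO : ℕ → ℂ := fun p => (-1 : ℂ) ^ p * ((Nat.doubleFactorial (2 * k + 1) : ℂ) /
      (Nat.doubleFactorial (2 * k - 2 * p + 1) : ℂ)) * (h.choose p : ℂ) with hcO
  set aO : ℕ → ℕ := fun p => 2 * k + 1 - 2 * p with haO
  set cE : ℕ → ℂ := fun p => (-1 : ℂ) ^ p * ((Nat.doubleFactorial (2 * k) : ℂ) /
      (Nat.doubleFactorial (2 * k - 2 * p) : ℂ)) * (h.choose p : ℂ) with hcE
  set aE : ℕ → ℕ := fun p => 2 * k - 2 * p with haE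
  have hOddEq : sOdd h k = gS cO aO h := rfl
  have hEvenEq : sEven h k = gS cE aE h := rfl
  have H2o : ∀ p, p < h → aO (p + 1) + 1 = aO p - 1 := by
    intro p hp
    simp only [haO]
    omega
  have H2e : ∀ p, p < h → aE (p + 1) + 1 = aE p - 1 := by
    intro p hp
    simp only [haE]
    omega
  have H1o : ∀ p, p < h →
      ((p : ℂ) + 1) * cO (p + 1) = -(cO p * ((h - p : ℕ) : ℂ) * ((aO p : ℕ) : ℂ)) := by
    intro p hp
    have hpk : p + 1 ≤ k := by omega
    simp only [hcO, haO]
    have e1 : 2 * k - 2 * (p + 1) + 1 = 2 * k - 2 * p - 1 := by omega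
    have e2 : 2 * k + 1 - 2 * p = 2 * k - 2 * p + 1 := by omega
    have e3 : Nat.doubleFactorial (2 * k - 2 * p + 1)
        = (2 * k - 2 * p + 1) * Nat.doubleFactorial (2 * k - 2 * p - 1) := by
      have e : 2 * k - 2 * p + 1 = (2 * k - 2 * p - 1) + 2 := by omega
      rw [e, Nat.doubleFactorial_add_two, ← e]
    have e4 : (h.choose (p + 1) : ℂ) * ((p : ℂ) + 1) = (h.choose p : ℂ) * ((h - p : ℕ) : ℂ) := by
      have := Nat.choose_succ_right_eq h p
      exact_mod_cast congrArg (Nat.cast : ℕ → ℂ) this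
    have dne : ((2 * k - 2 * p - 1).doubleFactorial : ℂ) ≠ 0 :=
      Nat.cast_ne_zero.mpr (Nat.doubleFactorial_pos _).ne'
    have hM : ((2 * k - 2 * p + 1 : ℕ) : ℂ) ≠ 0 := Nat.cast_ne_zero.mpr (by omega)
    rw [e1, e2, e3, Nat.cast_mul, pow_succ]
    exact coeff_aux ((-1 : ℂ) ^ p) (p : ℂ) (h.choose (p + 1) : ℂ) (h.choose p : ℂ)
      ((h - p : ℕ) : ℂ) ((2 * k + 1).doubleFactorial : ℂ)
      ((2 * k - 2 * p - 1).doubleFactorial : ℂ) ((2 * k - 2 * p + 1 : ℕ) : ℂ) dne hM e4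
  have H1e : ∀ p, p < h →
      ((p : ℂ) + 1) * cE (p + 1) = -(cE p * ((h - p : ℕ) : ℂ) * ((aE p : ℕ) : ℂ)) := by
    intro p hp
    have hpk : p + 1 ≤ k := by omega
    simp only [hcE, haE]
    have e1 : 2 * k - 2 * (p + 1) = 2 * k - 2 * p - 2 := by omega
    have e3 : Nat.doubleFactorial (2 * k - 2 * p)
        = (2 * k - 2 * p) * Nat.doubleFactorial (2 * k - 2 * p - 2) := by
      have e : 2 * k - 2 * p = (2 * k - 2 * p - 2) + 2 := by omega
      rw [e, Nat.doubleFactorial_add_two, ← e]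
    have e4 : (h.choose (p + 1) : ℂ) * ((p : ℂ) + 1) = (h.choose p : ℂ) * ((h - p : ℕ) : ℂ) := by
      have := Nat.choose_succ_right_eq h p
      exact_mod_cast congrArg (Nat.cast : ℕ → ℂ) this
    have dne : ((2 * k - 2 * p - 2).doubleFactorial : ℂ) ≠ 0 :=
      Nat.cast_ne_zero.mpr (Nat.doubleFactorial_pos _).ne'
    have hM : (((2 * k - 2 * p : ℕ) : ℂ)) ≠ 0 := Nat.cast_ne_zero.mpr (by omega)
    rw [e1, e3, Nat.cast_mul, pow_succ]
    exact coeff_aux ((-1 : ℂ) ^ p) (p : ℂ) (h.choose (p + 1) : ℂ) (h.choose p : ℂ)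
      ((h - p : ℕ) : ℂ) ((2 * k).doubleFactorial : ℂ)
      ((2 * k - 2 * p - 2).doubleFactorial : ℂ) ((2 * k - 2 * p : ℕ) : ℂ) dne hM e4
  refine ⟨fun r => ?_, fun r => ?_, fun r => ?_, fun r => ?_⟩
  · rw [hOddEq]; exact Ds_gS cO aO h H1o H2o r
  · rw [hEvenEq]; exact Ds_gS cE aE h H1e H2e r
  · rw [hOddEq]; exact Eul_gS cO aO h r
  · rw [hEvenEq]; exact Eul_gS cE aE h r
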